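/- arXiv:1607.02092 — 5 statements merged into one kernel-verified Lean document; each statement's English description precedes it below -/
import Mathlib

section
/- For β ∈ (0,1] and h ∈ (0,1), the inequality 2β^h / (1 + (2β−1)h) ≥ 1 holds for all h ∈ (0,1) if and only if β ≥ β_c, where β_c ∈ (0,1] is the unique solution of 2β ln β = 2β − 1 in (0,1]. -/
open Real Set Filter Topology

lemma g_strictAntiOn : StrictAntiOn (fun b : ℝ => 2 * b * Real.log b - (2 * b - 1)) (Set.Ioc 0 1) := by
  have hint : interior (Set.Ioc (0:ℝ) 1) = Set.Ioo 0 1 := interior_Ioc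
  apply strictAntiOn_of_deriv_neg (convex_Ioc 0 1)
  · apply ContinuousOn.sub
    · exact ContinuousOn.mul (by fun_prop) (Real.continuousOn_log.mono (by
        intro x hx; exact ne_of_gt hx.1))
    · fun_prop
  · intro x hx
    rw [hint] at hx
    have hx0 : (0:ℝ) < x := hx.1
    have hd : HasDerivAt (fun b : ℝ => 2 * b * Real.log b - (2 * b - 1))
        (2 * Real.log x + 2 * x * x⁻¹ - 2) x := by
      have h1 : HasDerivAt (fun b : ℝ => 2 * b) 2 x := by
        simpa using (hasDerivAt_id x).const_mul 2
      have h2 : HasDerivAt Real.log x⁻¹ x := Real.hasDerivAt_log (ne_of_gt hx0)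
      have := (h1.mul h2).sub (h1.sub_const 1)
      exact this
    rw [hd.deriv]
    have : Real.log x < 0 := Real.log_neg hx0 hx.2
    field_simp
    nlinarith

/-- For `β ∈ (0,1]`, the inequality `2β^h / (1 + (2β−1)h) ≥ 1` holds for all
`h ∈ (0,1)` if and only if `β ≥ β_c`, where `β_c` is the unique solution in
`(0,1]` of `2β ln β = 2β − 1`. -/
theorem inequality_iff_ge_beta_c (βc : ℝ)
    (hβc_mem : βc ∈ Set.Ioc (0 : ℝ) 1)
    (hβc_eq : 2 * βc * Real.log βc = 2 * βc - 1)
    (hβc_uniq : ∀ β ∈ Set.Ioc (0 : ℝ) 1, 2 * β * Real.log β = 2 * β - 1 → β = βc)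
    (β : ℝ) (hβ : β ∈ Set.Ioc (0 : ℝ) 1) :
    (∀ h ∈ Set.Ioo (0 : ℝ) 1, 1 ≤ 2 * β ^ h / (1 + (2 * β - 1) * h)) ↔ βc ≤ β := by
  obtain ⟨hβ0, hβ1⟩ := hβ
  have hgβc : 2 * βc * Real.log βc - (2 * βc - 1) = 0 := by linarith
  have hden : ∀ h ∈ Set.Ioo (0:ℝ) 1, 0 < 1 + (2 * β - 1) * h := by
    intro h hh
    nlinarith [hh.1, hh.2, hβ0]
  constructor
  · intro H
    by_contra hlt
    push_neg at hlt
    have hgpos : 0 < 2 * β * Real.log β - (2 * β - 1) := by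
      have := g_strictAntiOn ⟨hβ0, hβ1⟩ hβc_mem hlt
      simpa [hgβc] using this
    -- derivative argument at h = 1
    set f : ℝ → ℝ := fun h => 2 * β ^ h - (1 + (2 * β - 1) * h) with hf
    have hf1 : f 1 = 0 := by
      simp [hf, Real.rpow_one]; try ring
    have hderiv : HasDerivAt f (2 * β * Real.log β - (2 * β - 1)) 1 := by
      have h1 : HasDerivAt (fun h : ℝ => β ^ h) (β ^ (1:ℝ) * Real.log β) 1 :=
        (hasStrictDerivAt_const_rpow hβ0 1).hasDerivAt
      have h2 : HasDerivAt (fun h : ℝ => 1 + (2 * β - 1) * h) (2 * β - 1) 1 := by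
        simpa using ((hasDerivAt_id (1:ℝ)).const_mul (2 * β - 1)).const_add 1
      have := (h1.const_mul 2).sub h2
      refine this.congr_deriv ?_
      rw [Real.rpow_one]; ring
    have hslope : Filter.Tendsto (slope f 1) (𝓝[<] 1) (𝓝 (2 * β * Real.log β - (2 * β - 1))) :=
      (hasDerivAt_iff_tendsto_slope.mp hderiv).mono_left
        (nhdsWithin_mono _ fun x hx => ne_of_lt hx)
    have hle : 2 * β * Real.log β - (2 * β - 1) ≤ 0 := by
      refine le_of_tendsto hslope ?_
      filter_upwards [Ioo_mem_nhdsLT_of_mem (Set.mem_Ioc.mpr ⟨zero_lt_one, le_refl 1⟩)] with x hx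
      have hfx : 0 ≤ f x := by
        have := H x hx
        have hd := hden x hx
        rw [le_div_iff₀ hd] at this
        simp only [hf]
        nlinarith
      rw [slope_def_field, hf1, sub_zero]
      exact div_nonpos_of_nonneg_of_nonpos hfx (by linarith [hx.2])
    linarith
  · intro hge h hh
    have hgle : 2 * β * Real.log β - (2 * β - 1) ≤ 0 := by
      rcases eq_or_lt_of_le hge with heq | hlt
      · rw [← heq]; linarith
      · have := g_strictAntiOn hβc_mem ⟨hβ0, hβ1⟩ hlt
        simp only [hgβc] at this
        linarith
    have hd := hden h hh
    rw [le_div_iff₀ hd]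
    -- tangent line: β ^ h ≥ β * (1 + (h - 1) * log β)
    have hkey : β * (1 + (h - 1) * Real.log β) ≤ β ^ h := by
      have := Real.add_one_le_exp ((h - 1) * Real.log β)
      have hexp : β ^ h = β * Real.exp ((h - 1) * Real.log β) := by
        rw [Real.rpow_def_of_pos hβ0,
          show (h - 1) * Real.log β = h * Real.log β - Real.log β from by ring,
          Real.exp_sub, Real.exp_log hβ0]
        field_simp [ne_of_gt hβ0]
      rw [hexp]
      nlinarith [Real.exp_pos ((h - 1) * Real.log β), hβ0]
    nlinarith [hh.1, hh.2, hβ0, mul_nonneg (sub_nonneg.mpr hh.2.le) (neg_nonneg.mpr hgle)]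
end

section
/- For β ∈ (β_c, 1], there exists p ∈ (1,2] such that (2β−1)p + 1 − 2β^p > 0, where β_c is the unique root in (0,1] of 2β ln β = 2β − 1. -/
open Real Set

/-- For `β ∈ (β_c, 1]`, there exists `p ∈ (1,2]` such that
`(2β−1)p + 1 − 2β^p > 0`, where `β_c` is the unique root in `(0,1]` of
`2β ln β = 2β − 1`. -/
theorem exists_p_positive (βc : ℝ)
    (hβc_mem : βc ∈ Set.Ioc (0 : ℝ) 1)
    (hβc_eq : 2 * βc * Real.log βc = 2 * βc - 1)
    (hβc_uniq : ∀ β ∈ Set.Ioc (0 : ℝ) 1, 2 * β * Real.log β = 2 * β - 1 → β = βc)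
    (β : ℝ) (hβ : βc < β) (hβ1 : β ≤ 1) :
    ∃ p ∈ Set.Ioc (1 : ℝ) 2, 0 < (2 * β - 1) * p + 1 - 2 * β ^ p := by
  have hβ0 : 0 < β := lt_trans hβc_mem.1 hβ
  -- g is strictly monotone on Ioc 0 1
  set g : ℝ → ℝ := fun x => 2 * x - 1 - 2 * x * Real.log x with hg
  have hmono : StrictMonoOn g (Set.Ioc (0:ℝ) 1) := by
    apply strictMonoOn_of_deriv_pos (convex_Ioc 0 1)
    · apply ContinuousOn.sub (by fun_prop)
      apply ContinuousOn.mul (by fun_prop)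
      exact Real.continuousOn_log.mono (fun x hx => ne_of_gt hx.1)
    · intro x hx
      rw [interior_Ioc] at hx
      have hx0 : x ≠ 0 := ne_of_gt hx.1
      have hd : HasDerivAt g (2 - (2 * Real.log x + 2 * x * x⁻¹)) x := by
        have h1 : HasDerivAt (fun x : ℝ => 2 * x - 1) (2 * 1) x :=
          ((hasDerivAt_id x).const_mul 2).sub_const 1
        have h2 : HasDerivAt (fun x : ℝ => 2 * x * Real.log x)
            (2 * 1 * Real.log x + 2 * x * x⁻¹) x :=
          ((hasDerivAt_id x).const_mul 2).mul (Real.hasDerivAt_log hx0)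
        have h3 := h1.sub h2
        simp only [mul_one] at h3
        exact h3
      rw [hd.deriv]
      have : 2 * x * x⁻¹ = 2 := by field_simp
      rw [this]
      have : Real.log x < 0 := Real.log_neg hx.1 hx.2
      linarith
  have hgβc : g βc = 0 := by simp [hg]; linarith
  have hc : 0 < 2 * β - 1 - 2 * β * Real.log β := by
    have := hmono hβc_mem ⟨hβ0, hβ1⟩ hβ
    rw [hgβc] at this
    exact this
  set c : ℝ := 2 * β - 1 - 2 * β * Real.log β with hcdef
  set f : ℝ → ℝ := fun p => (2 * β - 1) * p + 1 - 2 * β ^ p with hf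
  have hf1 : f 1 = 0 := by simp [hf, Real.rpow_one]
  have hder : HasDerivAt f c 1 := by
    have h1 : HasDerivAt (fun p : ℝ => β ^ p) (β ^ (1:ℝ) * Real.log β) 1 :=
      (hasStrictDerivAt_const_rpow hβ0 1).hasDerivAt
    have h2 : HasDerivAt f ((2 * β - 1) * 1 - 2 * (β ^ (1:ℝ) * Real.log β)) 1 := by
      apply HasDerivAt.sub
      · exact (((hasDerivAt_id 1).const_mul (2 * β - 1)).add_const 1)
      · exact h1.const_mul 2
    simpa [Real.rpow_one, hcdef, mul_comm, mul_assoc, mul_left_comm] using h2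
  -- slope tends to c > 0 along 𝓝[>] 1
  have hslope : Filter.Tendsto (fun p => (f p - f 1) / (p - 1)) (nhdsWithin 1 (Set.Ioi 1)) (nhds c) := by
    have h := hasDerivAt_iff_tendsto_slope.mp hder
    have h2 : Filter.Tendsto (slope f 1) (nhdsWithin 1 (Set.Ioi 1)) (nhds c) :=
      h.mono_left (nhdsWithin_mono _ (fun x hx => ne_of_gt hx))
    apply h2.congr
    intro x
    rw [slope_def_field]
  have hev : ∀ᶠ p in nhdsWithin 1 (Set.Ioi (1:ℝ)), 0 < (f p - f 1) / (p - 1) :=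
    hslope.eventually (eventually_gt_nhds hc)
  have hev2 : ∀ᶠ p in nhdsWithin 1 (Set.Ioi (1:ℝ)), p ∈ Set.Ioc (1:ℝ) 2 := by
    have : Set.Ioc (1:ℝ) 2 ∈ nhdsWithin 1 (Set.Ioi (1:ℝ)) :=
      Ioc_mem_nhdsGT_of_mem (by norm_num : (1:ℝ) ∈ Set.Ico (1:ℝ) 2)
    exact this
  obtain ⟨p, hp1, hp2⟩ := (hev.and hev2).exists
  refine ⟨p, hp2, ?_⟩
  have hp1' : 0 < (f p - f 1) / (p - 1) := hp1
  rw [hf1, sub_zero] at hp1'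
  have hpos : 0 < p - 1 := sub_pos.mpr hp2.1
  have := (div_pos_iff.mp hp1')
  rcases this with ⟨h, _⟩ | ⟨_, h⟩
  · exact h
  · linarith
end

section
/- If X₁ and X₂ are independent, integrable, nonnegative random variables in L^p for 1 < p ≤ 2, then E[(X₁+X₂)^p] − (E[X₁+X₂])^p ≤ (E[X₁^p] − (E X₁)^p) + (E[X₂^p] − (E X₂)^p). -/
open MeasureTheory ProbabilityTheory

open Real Set
-- helper lemmas
lemma cn_rpow_add_le {p : ℝ} (hp : 0 ≤ p) {y c : ℝ} (hy : 0 ≤ y) (hc : 0 ≤ c) :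
    (y + c) ^ p ≤ 2 ^ p * (y ^ p + c ^ p) := by
  have h1 : y + c ≤ 2 * max y c := by
    rcases le_total y c with h | h <;> simp [max_eq_right, max_eq_left, h] <;> linarith
  have hmax : (0:ℝ) ≤ max y c := le_trans hy (le_max_left _ _)
  calc (y + c) ^ p ≤ (2 * max y c) ^ p :=
        Real.rpow_le_rpow (by linarith) h1 hp
    _ = 2 ^ p * (max y c) ^ p := Real.mul_rpow (by norm_num) hmax
    _ ≤ 2 ^ p * (y ^ p + c ^ p) := by
        have : (max y c) ^ p ≤ y ^ p + c ^ p := by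
          rcases le_total y c with h | h
          · rw [max_eq_right h]
            have : (0:ℝ) ≤ y ^ p := Real.rpow_nonneg hy p
            linarith
          · rw [max_eq_left h]
            have : (0:ℝ) ≤ c ^ p := Real.rpow_nonneg hc p
            linarith
        have h2 : (0:ℝ) ≤ (2:ℝ) ^ p := Real.rpow_nonneg (by norm_num) p
        nlinarith


lemma cn_concave {p : ℝ} (hp1 : 1 < p) (hp2 : p ≤ 2) {c : ℝ} (hc : 0 ≤ c) :
    ConcaveOn ℝ (Set.Ici 0) (fun y : ℝ => (y + c) ^ p - y ^ p) := by
  have hp0 : (0:ℝ) ≤ p := by linarith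
  apply concaveOn_of_hasDerivWithinAt2_nonpos (f' := fun y => p * (y + c) ^ (p - 1) - p * y ^ (p - 1))
    (f'' := fun y => p * ((p-1) * (y + c) ^ (p - 2)) - p * ((p-1) * y ^ (p - 2))) (convex_Ici 0)
  · exact (((continuous_id.add continuous_const).rpow_const (fun x => Or.inr hp0)).sub
      (continuous_id.rpow_const (fun x => Or.inr hp0))).continuousOn
  · intro x hx
    rw [interior_Ici] at hx
    have h1 : HasDerivAt (fun y : ℝ => (y + c) ^ p) (p * (x + c) ^ (p - 1)) x := by
      have := (Real.hasDerivAt_rpow_const (x := x + c) (p := p) (Or.inr hp1.le)).comp x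
        ((hasDerivAt_id x).add_const c)
      simpa [Function.comp_def] using this
    have h2 : HasDerivAt (fun y : ℝ => y ^ p) (p * x ^ (p - 1)) x :=
      Real.hasDerivAt_rpow_const (Or.inr hp1.le)
    exact ((h1.sub h2).hasDerivWithinAt)
  · intro x hx
    rw [interior_Ici] at hx
    have hx' : (0:ℝ) < x := hx
    have hx0 : x ≠ 0 := ne_of_gt hx'
    have hxc : x + c ≠ 0 := by positivity
    have h1 : HasDerivAt (fun y : ℝ => p * (y + c) ^ (p - 1)) (p * ((p-1) * (x + c) ^ (p - 2))) x := by
      have := ((Real.hasDerivAt_rpow_const (x := x + c) (p := p - 1) (Or.inl hxc)).comp x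
        ((hasDerivAt_id x).add_const c)).const_mul p
      simpa [show p - 1 - 1 = p - 2 by ring] using this
    have h2 : HasDerivAt (fun y : ℝ => p * y ^ (p - 1)) (p * ((p-1) * x ^ (p - 2))) x := by
      have := (Real.hasDerivAt_rpow_const (x := x) (p := p - 1) (Or.inl hx0)).const_mul p
      simpa [show p - 1 - 1 = p - 2 by ring] using this
    exact (h1.sub h2).hasDerivWithinAt
  · intro x hx
    rw [interior_Ici] at hx
    have key : (x + c) ^ (p - 2) ≤ x ^ (p - 2) :=
      Real.rpow_le_rpow_of_nonpos hx (by linarith) (by linarith)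
    have hp0' : (0:ℝ) < p := by linarith
    have hp1' : (0:ℝ) ≤ p - 1 := by linarith
    have := mul_le_mul_of_nonneg_left key (mul_nonneg hp0'.le hp1')
    nlinarith

lemma cn_integrable_shift {p : ℝ} (hp1 : 1 < p) (ν : Measure ℝ) [IsProbabilityMeasure ν]
    (hae : ∀ᵐ y ∂ν, 0 ≤ y) (hpow : Integrable (fun y => y ^ p) ν) {c : ℝ} (hc : 0 ≤ c) :
    Integrable (fun y => (y + c) ^ p) ν := by
  have hp0 : (0:ℝ) ≤ p := by linarith
  have hmeas : AEStronglyMeasurable (fun y : ℝ => (y + c) ^ p) ν :=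
    ((continuous_id.add continuous_const).rpow_const (fun x => Or.inr hp0)).aestronglyMeasurable
  refine Integrable.mono' ((hpow.add (integrable_const (c ^ p))).const_mul (2 ^ p)) hmeas ?_
  filter_upwards [hae] with y hy
  rw [Real.norm_of_nonneg (Real.rpow_nonneg (by linarith) p)]
  exact cn_rpow_add_le hp0 hy hc

lemma cn_jensen {p : ℝ} (hp1 : 1 < p) (hp2 : p ≤ 2) (ν : Measure ℝ) [IsProbabilityMeasure ν]
    (hae : ∀ᵐ y ∂ν, 0 ≤ y) (hid : Integrable id ν) (hpow : Integrable (fun y => y ^ p) ν)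
    {c : ℝ} (hc : 0 ≤ c) :
    ∫ y, (y + c) ^ p ∂ν ≤ (∫ y, y ^ p ∂ν) + ((∫ y, y ∂ν) + c) ^ p - (∫ y, y ∂ν) ^ p := by
  have hp0 : (0:ℝ) ≤ p := by linarith
  set g : ℝ → ℝ := fun y => (y + c) ^ p - y ^ p with hg
  have hshift : Integrable (fun y => (y + c) ^ p) ν := cn_integrable_shift hp1 ν hae hpow hc
  have hgi : Integrable (g ∘ id) ν := by
    simpa [g, Function.comp, Pi.sub_def] using hshift.sub hpow
  have hgc : ContinuousOn g (Set.Ici 0) :=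
    (((continuous_id.add continuous_const).rpow_const (fun x => Or.inr hp0)).sub
      (continuous_id.rpow_const (fun x => Or.inr hp0))).continuousOn
  have hfs : ∀ᵐ y ∂ν, id y ∈ Set.Ici (0:ℝ) := hae
  have key := (cn_concave hp1 hp2 hc).le_map_integral hgc isClosed_Ici hfs hid hgi
  have h1 : ∫ y, g (id y) ∂ν = (∫ y, (y + c) ^ p ∂ν) - ∫ y, y ^ p ∂ν := by
    simp only [id, g]
    exact integral_sub hshift hpow
  have h2 : ∫ y, id y ∂ν = ∫ y, y ∂ν := rfl
  rw [h1, h2] at key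
  linarith

/-- Chauvin–Neveu inequality: if `X₁, X₂` are independent nonnegative random
variables in `L^p`, `1 < p ≤ 2`, then with `v_p(X) = E X^p − (E X)^p`,
`v_p(X₁+X₂) ≤ v_p(X₁) + v_p(X₂)`. -/
theorem chauvin_neveu_inequality
    {Ω : Type*} [MeasurableSpace Ω] (μ : Measure Ω) [IsProbabilityMeasure μ]
    (p : ℝ) (hp1 : 1 < p) (hp2 : p ≤ 2)
    (X₁ X₂ : Ω → ℝ) (hpos₁ : ∀ ω, 0 ≤ X₁ ω) (hpos₂ : ∀ ω, 0 ≤ X₂ ω)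
    (hint₁ : Integrable X₁ μ) (hint₂ : Integrable X₂ μ)
    (hLp₁ : MemLp X₁ (ENNReal.ofReal p) μ) (hLp₂ : MemLp X₂ (ENNReal.ofReal p) μ)
    (hindep : IndepFun X₁ X₂ μ) :
    (∫ ω, (X₁ ω + X₂ ω) ^ p ∂μ) - (∫ ω, (X₁ ω + X₂ ω) ∂μ) ^ p ≤
      ((∫ ω, (X₁ ω) ^ p ∂μ) - (∫ ω, X₁ ω ∂μ) ^ p) +
      ((∫ ω, (X₂ ω) ^ p ∂μ) - (∫ ω, X₂ ω ∂μ) ^ p) := by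
  have hp0 : (0:ℝ) ≤ p := by linarith
  have hppos : (0:ℝ) < p := by linarith
  have hne0 : ENNReal.ofReal p ≠ 0 := (ENNReal.ofReal_pos.mpr hppos).ne'
  have hnetop : ENNReal.ofReal p ≠ ⊤ := ENNReal.ofReal_ne_top
  have hm₁ : AEMeasurable X₁ μ := hint₁.1.aemeasurable
  have hm₂ : AEMeasurable X₂ μ := hint₂.1.aemeasurable
  -- laws
  set ν₁ : Measure ℝ := μ.map X₁ with hν₁
  set ν₂ : Measure ℝ := μ.map X₂ with hν₂
  haveI : IsProbabilityMeasure ν₁ := Measure.isProbabilityMeasure_map hm₁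
  haveI : IsProbabilityMeasure ν₂ := Measure.isProbabilityMeasure_map hm₂
  -- continuous functions used
  have hcont_pow : Continuous (fun y : ℝ => y ^ p) :=
    continuous_id.rpow_const (fun x => Or.inr hp0)
  -- integrability of X^p
  have hintp : ∀ (X : Ω → ℝ), (∀ ω, 0 ≤ X ω) → MemLp X (ENNReal.ofReal p) μ →
      Integrable (fun ω => X ω ^ p) μ := by
    intro X hXpos hX
    have h := hX.integrable_norm_rpow hne0 hnetop
    refine h.congr (Filter.Eventually.of_forall fun ω => ?_)
    simp only [ENNReal.toReal_ofReal hp0, Real.norm_of_nonneg (hXpos ω)]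
  have hintp₁ := hintp X₁ hpos₁ hLp₁
  have hintp₂ := hintp X₂ hpos₂ hLp₂
  have hintp₁₂ : Integrable (fun ω => (X₁ ω + X₂ ω) ^ p) μ :=
    hintp (fun ω => X₁ ω + X₂ ω) (fun ω => add_nonneg (hpos₁ ω) (hpos₂ ω)) (hLp₁.add hLp₂)
  -- transfer to laws
  have hid₁ : Integrable id ν₁ :=
    (integrable_map_measure stronglyMeasurable_id.aestronglyMeasurable hm₁).2 hint₁
  have hid₂ : Integrable id ν₂ :=
    (integrable_map_measure stronglyMeasurable_id.aestronglyMeasurable hm₂).2 hint₂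
  have hpow₁ : Integrable (fun y => y ^ p) ν₁ :=
    (integrable_map_measure hcont_pow.aestronglyMeasurable hm₁).2 hintp₁
  have hpow₂ : Integrable (fun y => y ^ p) ν₂ :=
    (integrable_map_measure hcont_pow.aestronglyMeasurable hm₂).2 hintp₂
  have hae₁ : ∀ᵐ y ∂ν₁, 0 ≤ y :=
    (ae_map_iff hm₁ measurableSet_Ici).2 (Filter.Eventually.of_forall hpos₁)
  have hae₂ : ∀ᵐ y ∂ν₂, 0 ≤ y :=
    (ae_map_iff hm₂ measurableSet_Ici).2 (Filter.Eventually.of_forall hpos₂)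
  -- first moments
  have hI₁ : ∫ y, y ∂ν₁ = ∫ ω, X₁ ω ∂μ :=
    integral_map hm₁ stronglyMeasurable_id.aestronglyMeasurable
  have hI₂ : ∫ y, y ∂ν₂ = ∫ ω, X₂ ω ∂μ :=
    integral_map hm₂ stronglyMeasurable_id.aestronglyMeasurable
  have hP₁ : ∫ y, y ^ p ∂ν₁ = ∫ ω, X₁ ω ^ p ∂μ :=
    integral_map hm₁ hcont_pow.aestronglyMeasurable
  have hP₂ : ∫ y, y ^ p ∂ν₂ = ∫ ω, X₂ ω ^ p ∂μ :=
    integral_map hm₂ hcont_pow.aestronglyMeasurable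
  set m₁ : ℝ := ∫ ω, X₁ ω ∂μ with hm₁def
  set m₂ : ℝ := ∫ ω, X₂ ω ∂μ with hm₂def
  have hm₁0 : 0 ≤ m₁ := integral_nonneg hpos₁
  have hm₂0 : 0 ≤ m₂ := integral_nonneg hpos₂
  -- product structure
  have hprod : μ.map (fun ω => (X₁ ω, X₂ ω)) = ν₁.prod ν₂ :=
    (indepFun_iff_map_prod_eq_prod_map_map hm₁ hm₂).1 hindep
  have hcont2 : Continuous (fun z : ℝ × ℝ => (z.1 + z.2) ^ p) :=
    (continuous_fst.add continuous_snd).rpow_const (fun x => Or.inr hp0)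
  have hint_prod : Integrable (fun z : ℝ × ℝ => (z.1 + z.2) ^ p) (ν₁.prod ν₂) := by
    rw [← hprod]
    exact (integrable_map_measure hcont2.aestronglyMeasurable (hm₁.prodMk hm₂)).2 hintp₁₂
  have hA : ∫ ω, (X₁ ω + X₂ ω) ^ p ∂μ = ∫ x, ∫ y, (x + y) ^ p ∂ν₂ ∂ν₁ := by
    rw [← MeasureTheory.integral_prod _ hint_prod, ← hprod,
      integral_map (hm₁.prodMk hm₂) hcont2.aestronglyMeasurable]
  -- inner Jensen bound
  have hinner : ∀ᵐ x ∂ν₁, ∫ y, (x + y) ^ p ∂ν₂ ≤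
      (x + m₂) ^ p + ((∫ y, y ^ p ∂ν₂) - m₂ ^ p) := by
    filter_upwards [hae₁] with x hx
    have := cn_jensen hp1 hp2 ν₂ hae₂ hid₂ hpow₂ hx
    simp only [hI₂] at this
    calc ∫ y, (x + y) ^ p ∂ν₂ = ∫ y, (y + x) ^ p ∂ν₂ := by
          simp [add_comm]
      _ ≤ (∫ y, y ^ p ∂ν₂) + (m₂ + x) ^ p - m₂ ^ p := this
      _ = (x + m₂) ^ p + ((∫ y, y ^ p ∂ν₂) - m₂ ^ p) := by ring_nf
  have hint_left : Integrable (fun x => ∫ y, (x + y) ^ p ∂ν₂) ν₁ := by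
    have := hint_prod.integral_prod_left
    simpa using this
  have hshift₁ : Integrable (fun x => (x + m₂) ^ p) ν₁ :=
    cn_integrable_shift hp1 ν₁ hae₁ hpow₁ hm₂0
  have hstep1 : ∫ x, ∫ y, (x + y) ^ p ∂ν₂ ∂ν₁ ≤
      (∫ x, (x + m₂) ^ p ∂ν₁) + ((∫ y, y ^ p ∂ν₂) - m₂ ^ p) := by
    have hsumint : Integrable
        (fun x => (x + m₂) ^ p + ((∫ y, y ^ p ∂ν₂) - m₂ ^ p)) ν₁ :=
      hshift₁.add (integrable_const _)
    have h := integral_mono_ae hint_left hsumint hinner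
    rw [integral_add hshift₁ (integrable_const _)] at h
    simpa using h
  have hstep2 : ∫ x, (x + m₂) ^ p ∂ν₁ ≤
      (∫ x, x ^ p ∂ν₁) + (m₁ + m₂) ^ p - m₁ ^ p := by
    have := cn_jensen hp1 hp2 ν₁ hae₁ hid₁ hpow₁ hm₂0
    rwa [hI₁] at this
  have hsum : ∫ ω, (X₁ ω + X₂ ω) ∂μ = m₁ + m₂ := integral_add hint₁ hint₂
  rw [hA, hsum]
  rw [hP₁] at hstep2
  rw [hP₂] at hstep1
  linarith
end

section
/- For β ∈ (0,1] with β ≠ 1/2 and W_β = 2β e^{−(2β−1)T} with T mean-one exponential, E[W_β ln W_β] = ln(2β) − (2β−1)/(2β). Moreover E[W_β ln W_β] < ln 2 if and only if β > β_c, where β_c is the unique root in (0,1] of 2β ln β = 2β − 1. -/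
open MeasureTheory ProbabilityTheory Real Set
open scoped ENNReal NNReal

lemma int_exp_aux {r : ℝ} (hr : 0 < r) :
    ∫ x in Ioi (0:ℝ), Real.exp (-(r*x)) = 1/r := by
  have h := Real.integral_rpow_mul_exp_neg_mul_Ioi (a := 1) one_pos hr
  simpa using h

lemma int_x_exp_aux {r : ℝ} (hr : 0 < r) :
    ∫ x in Ioi (0:ℝ), x * Real.exp (-(r*x)) = 1/r^2 := by
  have h := Real.integral_rpow_mul_exp_neg_mul_Ioi (a := 2) two_pos hr
  have h2 : ((2:ℝ) - 1) = 1 := by norm_num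
  rw [h2] at h
  simp only [Real.rpow_one, Real.Gamma_two, mul_one] at h
  rw [h, show ((2:ℝ)) = ((2:ℕ):ℝ) by norm_num, Real.rpow_natCast]
  rw [div_pow, one_pow]

lemma int_x_exp_integrable {r : ℝ} (hr : 0 < r) :
    IntegrableOn (fun x : ℝ => x * Real.exp (-(r*x))) (Ioi 0) := by
  have h := integrableOn_rpow_mul_exp_neg_mul_rpow (s := 1) (p := 1) (b := r)
    (by norm_num) one_pos hr
  simpa [neg_mul] using h

lemma integral_expMeasure_one (g : ℝ → ℝ) :
    ∫ x, g x ∂(ProbabilityTheory.expMeasure 1)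
      = ∫ x in Ioi (0:ℝ), Real.exp (-x) * g x := by
  have hpdf : ∀ x : ℝ, exponentialPDFReal 1 x = if 0 ≤ x then Real.exp (-x) else 0 := by
    intro x
    simp [exponentialPDFReal, gammaPDFReal]
  have hmeas : Measurable fun x : ℝ => (exponentialPDFReal 1 x).toNNReal :=
    (measurable_exponentialPDFReal 1).real_toNNReal
  have hmeq : ProbabilityTheory.expMeasure 1
      = volume.withDensity (fun x => ((exponentialPDFReal 1 x).toNNReal : ℝ≥0∞)) := by
    rfl
  rw [hmeq, integral_withDensity_eq_integral_smul hmeas]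
  have : ∀ x : ℝ, (exponentialPDFReal 1 x).toNNReal • g x
      = Set.indicator (Ici (0:ℝ)) (fun x => Real.exp (-x) * g x) x := by
    intro x
    rw [NNReal.smul_def, Real.coe_toNNReal _ (exponentialPDFReal_nonneg one_pos x), hpdf]
    by_cases hx : (0:ℝ) ≤ x <;> simp [hx, Set.indicator, mem_Ici]
  simp_rw [this]
  rw [integral_indicator measurableSet_Ici, integral_Ici_eq_integral_Ioi]

lemma gfun_strictAnti : StrictAntiOn (fun b : ℝ => 2*b*Real.log b - (2*b-1)) (Ioc 0 1) := by
  apply strictAntiOn_of_deriv_neg (convex_Ioc 0 1)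
  · have hfe : (fun b : ℝ => 2*b*Real.log b - (2*b-1))
        = fun b : ℝ => 2*(b*Real.log b) - (2*b-1) := by funext b; ring
    rw [hfe]
    exact ((continuous_const.mul Real.continuous_mul_log).sub (by continuity)).continuousOn
  · intro x hx
    rw [interior_Ioc] at hx
    have hd : HasDerivAt (fun b : ℝ => 2*b*Real.log b - (2*b-1)) (2*Real.log x) x := by
      have h1 := (Real.hasDerivAt_mul_log (ne_of_gt hx.1)).const_mul 2
      have h2 : HasDerivAt (fun b : ℝ => 2*b-1) 2 x := by
        simpa using ((hasDerivAt_id x).const_mul 2).sub_const 1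
      have h3 := h1.sub h2
      have he : (fun b : ℝ => 2*b*Real.log b - (2*b-1))
          = fun b : ℝ => 2*(b*Real.log b) - (2*b-1) := by funext b; ring
      rw [he, show 2*Real.log x = 2*(Real.log x + 1) - 2 by ring]
      exact h3
    rw [hd.deriv]
    have hlx := Real.log_neg hx.1 hx.2
    linarith

set_option maxHeartbeats 1000000 in
/-- For `β ∈ (0,1]`, `β ≠ 1/2`, and `W_β = 2β e^{−(2β−1)T}` with `T` mean-one
exponential: `E[W_β ln W_β] = ln(2β) − (2β−1)/(2β)`, and
`E[W_β ln W_β] < ln 2` if and only if `β > β_c`, where `β_c` is the unique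
root in `(0,1]` of `2β ln β = 2β − 1`. -/
theorem W_beta_log_moment
    {Ω : Type*} [MeasurableSpace Ω] (μ : Measure Ω) [IsProbabilityMeasure μ]
    (T : Ω → ℝ) (hT : Measurable T)
    (hlaw : Measure.map T μ = ProbabilityTheory.expMeasure 1)
    (β : ℝ) (hβ : β ∈ Set.Ioc (0 : ℝ) 1) (hne : β ≠ 1 / 2)
    (βc : ℝ) (hβc_mem : βc ∈ Set.Ioc (0 : ℝ) 1)
    (hβc_eq : 2 * βc * Real.log βc = 2 * βc - 1)
    (hβc_uniq : ∀ b ∈ Set.Ioc (0 : ℝ) 1, 2 * b * Real.log b = 2 * b - 1 → b = βc) :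
    (∫ ω, (2 * β * Real.exp (-((2 * β - 1) * T ω))) *
        Real.log (2 * β * Real.exp (-((2 * β - 1) * T ω))) ∂μ =
      Real.log (2 * β) - (2 * β - 1) / (2 * β)) ∧
    ((∫ ω, (2 * β * Real.exp (-((2 * β - 1) * T ω))) *
        Real.log (2 * β * Real.exp (-((2 * β - 1) * T ω))) ∂μ < Real.log 2) ↔
      βc < β) := by
  obtain ⟨hβ0, hβ1⟩ := hβ
  set c : ℝ := 2 * β - 1 with hc
  have hb2 : (0:ℝ) < 2*β := by linarith
  have hb2ne : (2*β) ≠ 0 := ne_of_gt hb2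
  set F : ℝ → ℝ := fun t => (2 * β * Real.exp (-(c * t))) *
      Real.log (2 * β * Real.exp (-(c * t))) with hFdef
  have hFcont : Continuous F := by
    have h1 : Continuous fun t : ℝ => 2 * β * Real.exp (-(c * t)) :=
      continuous_const.mul (Real.continuous_exp.comp ((continuous_const.mul continuous_id).neg))
    exact Real.continuous_mul_log.comp h1
  have hgoalrw : (∫ ω, (2 * β * Real.exp (-(c * T ω))) *
      Real.log (2 * β * Real.exp (-(c * T ω))) ∂μ) = ∫ ω, F (T ω) ∂μ := rfl
  have step1 : ∫ ω, F (T ω) ∂μ = ∫ x, F x ∂(Measure.map T μ) :=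
    (integral_map hT.aemeasurable hFcont.aestronglyMeasurable).symm
  have hptwise : ∀ x : ℝ, Real.exp (-x) * F x
      = (2*β*Real.log (2*β)) * Real.exp (-(2*β*x))
        - (2*β*c) * (x * Real.exp (-(2*β*x))) := by
    intro x
    have hlm : Real.log (2*β*Real.exp (-(c*x))) = Real.log (2*β) + (-(c*x)) := by
      rw [Real.log_mul hb2ne (Real.exp_ne_zero _), Real.log_exp]
    have hee : Real.exp (-x) * Real.exp (-(c*x)) = Real.exp (-(2*β*x)) := by
      rw [← Real.exp_add]; congr 1; rw [hc]; ring
    rw [hFdef]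
    simp only
    rw [hlm, ← hee]
    ring
  have hInt1 : IntegrableOn (fun x : ℝ => Real.exp (-(2*β*x))) (Ioi 0) := by
    have h := exp_neg_integrableOn_Ioi 0 hb2
    simpa [neg_mul] using h
  have hInt2 : IntegrableOn (fun x : ℝ => x * Real.exp (-(2*β*x))) (Ioi 0) :=
    int_x_exp_integrable hb2
  have hE : ∫ ω, F (T ω) ∂μ = Real.log (2*β) - c/(2*β) := by
    rw [step1, hlaw, integral_expMeasure_one]
    simp_rw [hptwise]
    rw [integral_sub (hInt1.const_mul _) (hInt2.const_mul _),
      integral_const_mul, integral_const_mul, int_exp_aux hb2, int_x_exp_aux hb2]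
    field_simp
  rw [hgoalrw, hE]
  refine ⟨rfl, ?_⟩
  have hlog2β : Real.log (2*β) = Real.log 2 + Real.log β :=
    Real.log_mul two_ne_zero (ne_of_gt hβ0)
  have equiv1 : (Real.log (2*β) - c/(2*β) < Real.log 2)
      ↔ (2*β*Real.log β - (2*β-1) < 0) := by
    rw [hlog2β, hc]
    constructor
    · intro h
      have h2 : Real.log β < (2*β-1)/(2*β) := by linarith
      have h3 := (lt_div_iff₀ hb2).mp h2
      linarith
    · intro h
      have h3 : Real.log β * (2*β) < 2*β-1 := by linarith
      have h2 := (lt_div_iff₀ hb2).mpr h3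
      linarith
  rw [equiv1]
  have hmem1 : β ∈ Ioc (0:ℝ) 1 := ⟨hβ0, hβ1⟩
  constructor
  · intro hlt
    by_contra hle
    push_neg at hle
    rcases eq_or_lt_of_le hle with he | hl
    · rw [← he] at hβc_eq; linarith
    · have h := gfun_strictAnti hmem1 hβc_mem hl
      simp only at h
      linarith
  · intro hlt
    have h := gfun_strictAnti hβc_mem hmem1 hlt
    simp only at h
    linarith
end

section
/- Suppose φ_β: [0,∞) → ℝ is differentiable and satisfies φ_β(r) = ∫_{S_β} φ_β²(rs) ν_β(ds) for all r ≥ 0, where β ∈ (0,1], β ≠ 1/2. Then φ_β satisfies the delayed differential equation φ_β'(r) = (1/(r(2β−1))) φ_β²(βr) − (1/(r(2β−1))) φ_β(r) for all r > 0. -/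
open MeasureTheory Real Set

/-- The support `S_β`: `[0, β]` if `β > 1/2`, and `[β, ∞)` if `β < 1/2`. -/
noncomputable def Sset (β : ℝ) : Set ℝ :=
  if 1 / 2 < β then Set.Icc 0 β else Set.Ici β

/-- The density of `ν_β`: `s ↦ (s/β)^{1/(2β−1)} / (|2β−1| s)`. -/
noncomputable def nuDensity (β s : ℝ) : ℝ :=
  (s / β) ^ (1 / (2 * β - 1)) / (|2 * β - 1| * s)

lemma density_key (β x s α : ℝ) (hβ0 : 0 < β) (hx : 0 < x) (hs : 0 < s)
    (hK : 2 * β - 1 ≠ 0) (hα : α = 1 / (2 * β - 1)) :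
    nuDensity β s = (x * s) ^ (α - 1) * ((x * β) ^ (-α) * x / |2 * β - 1|) := by
  have hKabs : (0:ℝ) < |2 * β - 1| := abs_pos.mpr hK
  rw [nuDensity, ← hα]
  rw [Real.mul_rpow hx.le hs.le, Real.mul_rpow hx.le hβ0.le,
    Real.div_rpow hs.le hβ0.le, Real.rpow_neg hx.le, Real.rpow_neg hβ0.le,
    Real.rpow_sub hx, Real.rpow_sub hs, Real.rpow_one, Real.rpow_one]
  have hxα : x ^ α ≠ 0 := (Real.rpow_pos_of_pos hx α).ne'
  have hsα : s ^ α ≠ 0 := (Real.rpow_pos_of_pos hs α).ne'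
  have hβα : β ^ α ≠ 0 := (Real.rpow_pos_of_pos hβ0 α).ne'
  field_simp


set_option maxHeartbeats 1000000 in
/-- If `φ_β` is differentiable, bounded, and satisfies the fixed point equation
`φ_β(r) = ∫_{S_β} φ_β²(rs) ν_β(ds)` for all `r ≥ 0` (`β ∈ (0,1]`, `β ≠ 1/2`),
then it satisfies the delayed differential equation
`φ_β'(r) = (1/(r(2β−1))) φ_β²(βr) − (1/(r(2β−1))) φ_β(r)` for `r > 0`. -/
theorem fixed_point_implies_delayed_ode (β : ℝ) (hβ : β ∈ Set.Ioc (0 : ℝ) 1)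
    (hne : β ≠ 1 / 2) (φ : ℝ → ℝ) (hdiff : Differentiable ℝ φ)
    (hbdd : ∃ C, ∀ r, |φ r| ≤ C)
    (hfix : ∀ r : ℝ, 0 ≤ r →
      φ r = ∫ s in Sset β, (φ (r * s)) ^ 2 * nuDensity β s) :
    ∀ r : ℝ, 0 < r →
      deriv φ r = (1 / (r * (2 * β - 1))) * (φ (β * r)) ^ 2 -
        (1 / (r * (2 * β - 1))) * φ r := by
  obtain ⟨hβ0, hβ1⟩ := hβ
  obtain ⟨C, hC⟩ := hbdd
  intro r hr
  have hKne : (2 * β - 1) ≠ 0 := fun h => hne (by linarith)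
  have hKabs : (0:ℝ) < |2 * β - 1| := abs_pos.mpr hKne
  set α : ℝ := 1 / (2 * β - 1) with hα
  set ψ : ℝ → ℝ := fun u => (φ u) ^ 2 * u ^ (α - 1) with hψ
  have hPpos : (0:ℝ) < r * β := mul_pos hr hβ0
  have hφm : Measurable φ := hdiff.continuous.measurable
  have hψmeas : Measurable ψ := by measurability
  have hψcont : ∀ u : ℝ, 0 < u → ContinuousAt ψ u := fun u hu =>
    ((hdiff.continuous.continuousAt).pow 2).mul
      (Real.continuousAt_rpow_const u (α - 1) (Or.inl hu.ne'))
  have hψnonneg : ∀ u : ℝ, 0 ≤ u → 0 ≤ ψ u := fun u hu =>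
    mul_nonneg (sq_nonneg _) (Real.rpow_nonneg hu _)
  have hψbound : ∀ u : ℝ, 0 ≤ u → ‖ψ u‖ ≤ C ^ 2 * u ^ (α - 1) := by
    intro u hu
    rw [Real.norm_eq_abs, abs_of_nonneg (hψnonneg u hu)]
    have h1 : (φ u) ^ 2 ≤ C ^ 2 := by
      rw [← sq_abs]
      exact pow_le_pow_left₀ (abs_nonneg _) (hC u) 2
    exact mul_le_mul_of_nonneg_right h1 (Real.rpow_nonneg hu _)
  have hC0 : (0:ℝ) ≤ C := le_trans (abs_nonneg _) (hC 0)
  -- exponent cancellation facts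
  have e1 : (r * β) ^ (α - 1) * (r * β) ^ (-α) = (r * β)⁻¹ := by
    rw [← Real.rpow_add hPpos, show α - 1 + -α = (-1:ℝ) by ring, Real.rpow_neg_one]
  have e2 : (r * β) ^ α * (r * β) ^ (-α - 1) = (r * β)⁻¹ := by
    rw [← Real.rpow_add hPpos, show α + (-α - 1) = (-1:ℝ) by ring, Real.rpow_neg_one]
  have emul : (r * β) ^ (-α) * (r * β) ^ α = 1 := by
    rw [← Real.rpow_add hPpos, show -α + α = (0:ℝ) by ring, Real.rpow_zero]
  have hBinner : HasDerivAt (fun x => (x * β) ^ (-α))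
      ((-α) * (r * β) ^ (-α - 1) * β) r :=
    by have := (Real.hasDerivAt_rpow_const (p := -α) (Or.inl hPpos.ne')).comp r (hasDerivAt_mul_const β); exact this
  have hB : HasDerivAt (fun x => (x * β) ^ (-α) / |2 * β - 1|)
      ((-α) * (r * β) ^ (-α - 1) * β / |2 * β - 1|) r := hBinner.div_const _
  by_cases hb2 : 1 / 2 < β
  · -- case β > 1/2
    have hKpos : (0:ℝ) < 2 * β - 1 := by linarith
    have hKabs_eq : |2 * β - 1| = 2 * β - 1 := abs_of_pos hKpos
    have hα1 : 1 ≤ α := by rw [hα, le_div_iff₀ hKpos]; linarith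
    have hint : ∀ y : ℝ, 0 < y → IntervalIntegrable ψ volume 0 y := by
      intro y hy
      rw [intervalIntegrable_iff_integrableOn_Ioc_of_le hy.le]
      apply Measure.integrableOn_of_bounded (M := C ^ 2 * y ^ (α - 1))
        measure_Ioc_lt_top.ne hψmeas.aestronglyMeasurable
      filter_upwards [ae_restrict_mem measurableSet_Ioc] with u hu
      calc ‖ψ u‖ ≤ C ^ 2 * u ^ (α - 1) := hψbound u hu.1.le
        _ ≤ C ^ 2 * y ^ (α - 1) := mul_le_mul_of_nonneg_left
              (Real.rpow_le_rpow hu.1.le hu.2 (by linarith)) (by positivity)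
    have hrep : ∀ x : ℝ, 0 < x →
        φ x = (∫ u in (0:ℝ)..(x * β), ψ u) * ((x * β) ^ (-α) / |2 * β - 1|) := by
      intro x hx
      have h0 : φ x = ∫ s in Set.Icc 0 β, (φ (x * s)) ^ 2 * nuDensity β s := by
        rw [hfix x hx.le]; unfold Sset; rw [if_pos hb2]
      rw [h0, integral_Icc_eq_integral_Ioc]
      have h1 : ∫ s in Set.Ioc 0 β, (φ (x * s)) ^ 2 * nuDensity β s =
          ∫ s in Set.Ioc 0 β, ψ (x * s) * ((x * β) ^ (-α) * x / |2 * β - 1|) := by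
        apply setIntegral_congr_fun measurableSet_Ioc
        intro s hs
        dsimp only
        rw [density_key β x s α hβ0 hx hs.1 hKne hα]
        simp only [hψ]
        ring
      rw [h1, ← intervalIntegral.integral_of_le hβ0.le,
        intervalIntegral.integral_comp_mul_left
          (fun u => ψ u * ((x * β) ^ (-α) * x / |2 * β - 1|)) hx.ne',
        mul_zero, intervalIntegral.integral_mul_const, smul_eq_mul]
      field_simp
    have hF : HasDerivAt (fun y => ∫ u in (0:ℝ)..y, ψ u) (ψ (r * β)) (r * β) :=
      intervalIntegral.integral_hasDerivAt_right (hint _ hPpos)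
        (hψmeas.stronglyMeasurable.stronglyMeasurableAtFilter)
        (hψcont _ hPpos)
    have hA : HasDerivAt (fun x => ∫ u in (0:ℝ)..(x * β), ψ u)
        (ψ (r * β) * β) r := by have := hF.comp r (hasDerivAt_mul_const β); exact this
    have hAB : HasDerivAt (fun x => (∫ u in (0:ℝ)..(x * β), ψ u) *
        ((x * β) ^ (-α) / |2 * β - 1|))
        (ψ (r * β) * β * ((r * β) ^ (-α) / |2 * β - 1|) +
          (∫ u in (0:ℝ)..(r * β), ψ u) *
            ((-α) * (r * β) ^ (-α - 1) * β / |2 * β - 1|)) r := hA.mul hB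
    have hev : φ =ᶠ[nhds r] fun x => (∫ u in (0:ℝ)..(x * β), ψ u) *
        ((x * β) ^ (-α) / |2 * β - 1|) := by
      filter_upwards [Ioi_mem_nhds hr] with x hx
      exact hrep x hx
    have hGr : (∫ u in (0:ℝ)..(r * β), ψ u) = φ r * (r * β) ^ α * |2 * β - 1| := by
      rw [hrep r hr, div_eq_mul_inv]
      symm
      calc (∫ u in (0:ℝ)..(r * β), ψ u) * ((r * β) ^ (-α) * |2 * β - 1|⁻¹) *
            (r * β) ^ α * |2 * β - 1|
          = (∫ u in (0:ℝ)..(r * β), ψ u) *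
              (((r * β) ^ (-α) * (r * β) ^ α) * (|2 * β - 1|⁻¹ * |2 * β - 1|)) := by
            ring
        _ = ∫ u in (0:ℝ)..(r * β), ψ u := by
            rw [emul, inv_mul_cancel₀ hKabs.ne']; ring
    rw [hev.deriv_eq, hAB.deriv, hGr]
    simp only [hψ]
    have t1 : φ (r * β) ^ 2 * (r * β) ^ (α - 1) * β * ((r * β) ^ (-α) / |2 * β - 1|) =
        φ (r * β) ^ 2 * β * ((r * β) ^ (α - 1) * (r * β) ^ (-α)) / |2 * β - 1| := by
      ring
    have t2 : φ r * (r * β) ^ α * |2 * β - 1| *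
        ((-α) * (r * β) ^ (-α - 1) * β / |2 * β - 1|) =
        -(α * φ r * β * ((r * β) ^ α * (r * β) ^ (-α - 1)) *
          (|2 * β - 1| / |2 * β - 1|)) := by
      ring
    rw [t1, t2, e1, e2, div_self hKabs.ne', hKabs_eq, hα, mul_comm β r]
    field_simp [hPpos.ne', hr.ne', hβ0.ne', hKne]
    ring
  · -- case β < 1/2
    have hKneg : 2 * β - 1 < 0 := by
      have : β < 1/2 := lt_of_le_of_ne (le_of_not_gt hb2) hne
      linarith
    have hKabs_eq : |2 * β - 1| = -(2 * β - 1) := abs_of_neg hKneg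
    have hαneg : α < 0 := by rw [hα]; exact div_neg_of_pos_of_neg one_pos hKneg
    have hα1 : α - 1 < -1 := by linarith
    have hintIoi : ∀ c : ℝ, 0 < c → IntegrableOn ψ (Set.Ioi c) := by
      intro c hc
      have hdom : IntegrableOn (fun u => C ^ 2 * u ^ (α - 1)) (Set.Ioi c) :=
        (integrableOn_Ioi_rpow_of_lt hα1 hc).const_mul (C ^ 2)
      refine Integrable.mono hdom hψmeas.aestronglyMeasurable ?_
      filter_upwards [ae_restrict_mem measurableSet_Ioi] with u hu
      have hu0 : (0:ℝ) < u := lt_trans hc hu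
      calc ‖ψ u‖ ≤ C ^ 2 * u ^ (α - 1) := hψbound u hu0.le
        _ ≤ ‖C ^ 2 * u ^ (α - 1)‖ := le_abs_self _
    have hII : IntervalIntegrable ψ volume (r * β) (r * β + 1) := by
      rw [intervalIntegrable_iff_integrableOn_Ioc_of_le (by linarith)]
      exact (hintIoi _ hPpos).mono_set Set.Ioc_subset_Ioi_self
    have hrep : ∀ x : ℝ, 0 < x →
        φ x = (∫ u in Set.Ioi (x * β), ψ u) * ((x * β) ^ (-α) / |2 * β - 1|) := by
      intro x hx
      have h0 : φ x = ∫ s in Set.Ici β, (φ (x * s)) ^ 2 * nuDensity β s := by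
        rw [hfix x hx.le]; unfold Sset; rw [if_neg hb2]
      rw [h0, integral_Ici_eq_integral_Ioi]
      have h1 : ∫ s in Set.Ioi β, (φ (x * s)) ^ 2 * nuDensity β s =
          ∫ s in Set.Ioi β, ψ (x * s) * ((x * β) ^ (-α) * x / |2 * β - 1|) := by
        apply setIntegral_congr_fun measurableSet_Ioi
        intro s hs
        dsimp only
        rw [density_key β x s α hβ0 hx (lt_trans hβ0 hs) hKne hα]
        simp only [hψ]
        ring
      rw [h1, integral_comp_mul_left_Ioi
          (fun u => ψ u * ((x * β) ^ (-α) * x / |2 * β - 1|)) β hx,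
        integral_mul_const, smul_eq_mul]
      field_simp
    have hdec : ∀ᶠ y in nhds (r * β), (∫ u in Set.Ioi y, ψ u) =
        (∫ u in y..(r * β + 1), ψ u) + ∫ u in Set.Ioi (r * β + 1), ψ u := by
      filter_upwards [Ioo_mem_nhds hPpos (lt_add_one _)] with y hy
      rw [intervalIntegral.integral_of_le hy.2.le,
        ← setIntegral_union (Set.Ioc_disjoint_Ioi le_rfl) measurableSet_Ioi
          ((hintIoi y hy.1).mono_set Set.Ioc_subset_Ioi_self)
          (hintIoi _ (by linarith [hy.1, hPpos])),
        Set.Ioc_union_Ioi_eq_Ioi hy.2.le]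
    have hHder : HasDerivAt (fun y => ∫ u in Set.Ioi y, ψ u) (-ψ (r * β)) (r * β) := by
      have hd : HasDerivAt (fun y => (∫ u in y..(r * β + 1), ψ u) +
          ∫ u in Set.Ioi (r * β + 1), ψ u) (-ψ (r * β)) (r * β) :=
        (intervalIntegral.integral_hasDerivAt_left hII
          (hψmeas.stronglyMeasurable.stronglyMeasurableAtFilter)
          (hψcont _ hPpos)).add_const _
      exact hd.congr_of_eventuallyEq hdec
    have hA : HasDerivAt (fun x => ∫ u in Set.Ioi (x * β), ψ u)
        (-ψ (r * β) * β) r := by have := hHder.comp r (hasDerivAt_mul_const β); exact this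
    have hAB : HasDerivAt (fun x => (∫ u in Set.Ioi (x * β), ψ u) *
        ((x * β) ^ (-α) / |2 * β - 1|))
        (-ψ (r * β) * β * ((r * β) ^ (-α) / |2 * β - 1|) +
          (∫ u in Set.Ioi (r * β), ψ u) *
            ((-α) * (r * β) ^ (-α - 1) * β / |2 * β - 1|)) r := hA.mul hB
    have hev : φ =ᶠ[nhds r] fun x => (∫ u in Set.Ioi (x * β), ψ u) *
        ((x * β) ^ (-α) / |2 * β - 1|) := by
      filter_upwards [Ioi_mem_nhds hr] with x hx
      exact hrep x hx
    have hGr : (∫ u in Set.Ioi (r * β), ψ u) = φ r * (r * β) ^ α * |2 * β - 1| := by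
      rw [hrep r hr, div_eq_mul_inv]
      symm
      calc (∫ u in Set.Ioi (r * β), ψ u) * ((r * β) ^ (-α) * |2 * β - 1|⁻¹) *
            (r * β) ^ α * |2 * β - 1|
          = (∫ u in Set.Ioi (r * β), ψ u) *
              (((r * β) ^ (-α) * (r * β) ^ α) * (|2 * β - 1|⁻¹ * |2 * β - 1|)) := by
            ring
        _ = ∫ u in Set.Ioi (r * β), ψ u := by
            rw [emul, inv_mul_cancel₀ hKabs.ne']; ring
    rw [hev.deriv_eq, hAB.deriv, hGr]
    simp only [hψ]
    have t1 : -(φ (r * β) ^ 2 * (r * β) ^ (α - 1)) * β *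
        ((r * β) ^ (-α) / |2 * β - 1|) =
        -(φ (r * β) ^ 2 * β * ((r * β) ^ (α - 1) * (r * β) ^ (-α)) / |2 * β - 1|) := by
      ring
    have t2 : φ r * (r * β) ^ α * |2 * β - 1| *
        ((-α) * (r * β) ^ (-α - 1) * β / |2 * β - 1|) =
        -(α * φ r * β * ((r * β) ^ α * (r * β) ^ (-α - 1)) *
          (|2 * β - 1| / |2 * β - 1|)) := by
      ring
    rw [t1, t2, e1, e2, div_self hKabs.ne', hKabs_eq, hα, mul_comm β r, div_neg]
    field_simp [hPpos.ne', hr.ne', hβ0.ne', hKne]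
    ring
end
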